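/- L² bound for the cell averages in the resonator strip. Let 0 ≤ c < d ≤ a be fixed and let Y_V := (0,1)×(L, L+V). Suppose the functions u^{ε_n} are C¹ on a neighborhood of the closure of Ω_{ε_n}, satisfy the uniform bound ∫_{Ω_{ε_n}} (|u^{ε_n}|² + |∇u^{ε_n}|²) ≤ M for all n, and that the strip averages v^{ε}(x₁) := (1/(εV)) ∫_{εL}^{ε(L+V)} u^{ε}(x₁,x₂) dx₂ are uniformly bounded in L²(I): ∫_0^a |v^{ε_n}|² ≤ M' for all n. Define U^{ε}(y₁,y₂) := (1/|K_ε|) Σ_{k ∈ K_ε} u^{ε}(ε(k+y₁), ε y₂) for (y₁,y₂) ∈ Y_V. Then the restrictions U^{ε_n}|_{Y_V} are uniformly bounded in L²(Y_V): there is a constant C, depending only on a, L, V, c, d, M and M', with ∫_{Y_V} |U^{ε_n}(y)|² dy ≤ C for all n. -/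

import Mathlib

open MeasureTheory Set Filter Topology

noncomputable section

/-- First partial derivative `∂₁u`. -/
def pd1 (u : ℝ × ℝ → ℝ) (x : ℝ × ℝ) : ℝ := fderiv ℝ u x (1, 0)

/-- Second partial derivative `∂₂u`. -/
def pd2 (u : ℝ × ℝ → ℝ) (x : ℝ × ℝ) : ℝ := fderiv ℝ u x (0, 1)

/-- The gradient `∇u` as a pair. -/
def grad (u : ℝ × ℝ → ℝ) (x : ℝ × ℝ) : ℝ × ℝ := (pd1 u x, pd2 u x)

/-- Euclidean scalar product on `ℝ²`. -/
def dot (p q : ℝ × ℝ) : ℝ := p.1 * q.1 + p.2 * q.2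

/-- The limit domain `Ω₀ = (0,a) × (−b,0)`. -/
def Omega0 (a b : ℝ) : Set (ℝ × ℝ) := Ioo 0 a ×ˢ Ioo (-b) 0

/-- The resonator strip `S_ε = (0,a) × (Lε, (L+V)ε)`. -/
def Strip (a L V ε : ℝ) : Set (ℝ × ℝ) := Ioo 0 a ×ˢ Ioo (L * ε) ((L + V) * ε)

/-- The channels `C_ε = ⋃_{k=0}^{a/ε−1} (kε, kε+αε³) × [0, Lε]`. -/
def Channels (a L α ε : ℝ) : Set (ℝ × ℝ) :=
  ⋃ k ∈ Finset.range ⌊a / ε⌋₊,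
    Ioo ((k : ℝ) * ε) ((k : ℝ) * ε + α * ε ^ 3) ×ˢ Icc 0 (L * ε)

/-- The perforated domain `Ω_ε = Ω₀ ∪ S_ε ∪ C_ε`. -/
def OmegaEps (a b L V α ε : ℝ) : Set (ℝ × ℝ) :=
  Omega0 a b ∪ Strip a L V ε ∪ Channels a L α ε

/-- `u` is C¹ on an open neighborhood of the closure of `s`. -/
def C1Nhd (u : ℝ × ℝ → ℝ) (s : Set (ℝ × ℝ)) : Prop :=
  ∃ U : Set (ℝ × ℝ), IsOpen U ∧ closure s ⊆ U ∧ ContDiffOn ℝ 1 u U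

/-- `ε` is an admissible parameter: `ε > 0` and `a/ε ∈ ℕ`. -/
def Admissible (a ε : ℝ) : Prop := 0 < ε ∧ ∃ N : ℕ, a = (N : ℝ) * ε

/-- Weak solution of the Helmholtz problem `−Δu − ω²u = f` in `Ω_ε` with
homogeneous Neumann boundary conditions. -/
def IsHelmholtzSol (a b L V α ω ε : ℝ) (f u : ℝ × ℝ → ℝ) : Prop :=
  C1Nhd u (OmegaEps a b L V α ε) ∧
  ∀ φ : ℝ × ℝ → ℝ, ContDiff ℝ 1 φ → HasCompactSupport φ →
    (∫ x in OmegaEps a b L V α ε, dot (grad u x) (grad φ x))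
      - ω ^ 2 * ∫ x in OmegaEps a b L V α ε, u x * φ x
      = ∫ x in OmegaEps a b L V α ε, f x * φ x

/-- Vertical average of `u` over the resonator strip. -/
def vEps (L V ε : ℝ) (u : ℝ × ℝ → ℝ) (x₁ : ℝ) : ℝ :=
  (1 / (ε * V)) * ∫ x₂ in (ε * L)..(ε * (L + V)), u (x₁, x₂)

/-- Corrector `w^ε = (u^ε − u)/ε`. -/
def wEps (ε : ℝ) (uε u : ℝ × ℝ → ℝ) : ℝ × ℝ → ℝ := fun x => (uε x - u x) / ε

open Classical in
/-- Index set `K_ε = { k ∈ ℕ : kε ∈ [0, a−ε] and (kε, kε+ε) ∩ [c,d] ≠ ∅ }`. -/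
def Kset (a c d ε : ℝ) : Finset ℕ :=
  (Finset.range (⌊a / ε⌋₊ + 1)).filter fun k =>
    (k : ℝ) * ε ∈ Icc 0 (a - ε) ∧
      (Ioo ((k : ℝ) * ε) ((k : ℝ) * ε + ε) ∩ Icc c d).Nonempty

/-- Cell average `U^ε(y) = (1/|K_ε|) Σ_{k ∈ K_ε} u^ε(ε(k+y₁), ε y₂)`. -/
def Uav (a c d ε : ℝ) (uε : ℝ × ℝ → ℝ) (y : ℝ × ℝ) : ℝ :=
  (1 / ((Kset a c d ε).card : ℝ)) *
    ∑ k ∈ Kset a c d ε, uε (ε * ((k : ℝ) + y.1), ε * y.2)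

/-- The lower bulk part `Y_U = (0,1) × (−1,0)` of the unit cell. -/
def Ybelow : Set (ℝ × ℝ) := Ioo (0:ℝ) 1 ×ˢ Ioo (-1:ℝ) 0

/-- The upper bulk part `Y_V = (0,1) × (L, L+V)` of the unit cell. -/
def Yabove (L V : ℝ) : Set (ℝ × ℝ) := Ioo (0:ℝ) 1 ×ˢ Ioo L (L + V)


set_option maxHeartbeats 1000000

-- 1D Cauchy-Schwarz via AM-GM: (∫|g'|)² ≤ (q-p) ∫ g'²
lemma l2_cs {g' : ℝ → ℝ} {p q : ℝ} (hpq : p < q)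
    (hg' : ContinuousOn g' (Icc p q)) :
    (∫ s in p..q, |g' s|) ^ 2 ≤ (q - p) * ∫ s in p..q, (g' s) ^ 2 := by
  have hqp : (0:ℝ) < q - p := by linarith
  set A := ∫ s in p..q, |g' s| with hA
  set B := ∫ s in p..q, (g' s) ^ 2 with hB
  have hint : IntervalIntegrable g' volume p q :=
    (hg'.mono (by rw [uIcc_of_le hpq.le])).intervalIntegrable
  have hintsq : IntervalIntegrable (fun s => (g' s) ^ 2) volume p q :=
    ((hg'.pow 2).mono (by rw [uIcc_of_le hpq.le])).intervalIntegrable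
  have hintabs : IntervalIntegrable (fun s => |g' s|) volume p q := hint.abs
  have hA0 : 0 ≤ A := intervalIntegral.integral_nonneg hpq.le (fun s _ => abs_nonneg _)
  have hB0 : 0 ≤ B := intervalIntegral.integral_nonneg hpq.le (fun s _ => sq_nonneg _)
  have key : ∀ lam : ℝ, 0 < lam → A ≤ B / (2 * lam) + (q - p) * (lam / 2) := by
    intro lam hlam
    have hmono : A ≤ ∫ s in p..q, ((g' s) ^ 2 / (2 * lam) + lam / 2) := by
      apply intervalIntegral.integral_mono_on hpq.le hintabs
      · exact (hintsq.div_const _).add (intervalIntegrable_const)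
      · intro s _
        have h1 : 0 ≤ (|g' s| - lam) ^ 2 := sq_nonneg _
        have h2 : (g' s) ^ 2 = |g' s| ^ 2 := (sq_abs _).symm
        rw [h2]
        rw [div_add_div _ _ (by positivity) (by norm_num : (2:ℝ) ≠ 0), le_div_iff₀ (by positivity)]
        nlinarith
    have heq : (∫ s in p..q, ((g' s) ^ 2 / (2 * lam) + lam / 2))
        = B / (2 * lam) + (q - p) * (lam / 2) := by
      rw [intervalIntegral.integral_add (hintsq.div_const _) intervalIntegrable_const,
        intervalIntegral.integral_div, intervalIntegral.integral_const, smul_eq_mul]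
    linarith [hmono, heq.le]
  rcases eq_or_lt_of_le hB0 with hB0' | hBpos
  · -- B = 0 : A ≤ 0
    have hA0' : A ≤ 0 := by
      have h : ∀ ε : ℝ, 0 < ε → A ≤ 0 + ε := by
        intro ε hε
        have := key (2 * ε / (q - p)) (by positivity)
        rw [← hB0'] at this
        calc A ≤ 0 / (2 * (2 * ε / (q - p))) + (q - p) * (2 * ε / (q - p) / 2) := this
          _ = 0 + ε := by field_simp; ring
      exact le_of_forall_pos_le_add h
    have : A = 0 := le_antisymm hA0' hA0
    rw [this]; rw [← hB0']; nlinarith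
  · set lam := Real.sqrt B / Real.sqrt (q - p) with hlam
    have hsB : Real.sqrt B > 0 := Real.sqrt_pos.2 hBpos
    have hsqp : Real.sqrt (q - p) > 0 := Real.sqrt_pos.2 hqp
    have hlampos : 0 < lam := by positivity
    have h := key lam hlampos
    have hval : B / (2 * lam) + (q - p) * (lam / 2) = Real.sqrt ((q - p) * B) := by
      rw [hlam]
      rw [Real.sqrt_mul hqp.le]
      have hBs : B = Real.sqrt B * Real.sqrt B := (Real.mul_self_sqrt hB0).symm
      have hqs : q - p = Real.sqrt (q - p) * Real.sqrt (q - p) :=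
        (Real.mul_self_sqrt hqp.le).symm
      field_simp
      nlinarith [hsB, hsqp]
    rw [hval] at h
    calc A ^ 2 ≤ Real.sqrt ((q - p) * B) ^ 2 := by
          apply pow_le_pow_left₀ hA0 h
      _ = (q - p) * B := Real.sq_sqrt (by positivity)

-- pointwise Poincaré: (g x - avg)² ≤ (q-p) ∫ g'²
lemma poincare1D {g g' : ℝ → ℝ} {p q : ℝ} (hpq : p < q)
    (hg : ∀ s ∈ Icc p q, HasDerivAt g (g' s) s)
    (hg' : ContinuousOn g' (Icc p q)) {x : ℝ} (hx : x ∈ Icc p q) :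
    (g x - (1 / (q - p)) * ∫ t in p..q, g t) ^ 2 ≤ (q - p) * ∫ s in p..q, (g' s) ^ 2 := by
  have hqp : (0:ℝ) < q - p := by linarith
  have hgc : ContinuousOn g (Icc p q) := fun s hs => (hg s hs).continuousAt.continuousWithinAt
  have hg'int : IntervalIntegrable g' volume p q :=
    (hg'.mono (by rw [uIcc_of_le hpq.le])).intervalIntegrable
  have hgint : IntervalIntegrable g volume p q :=
    (hgc.mono (by rw [uIcc_of_le hpq.le])).intervalIntegrable
  have habsint : IntervalIntegrable (fun s => |g' s|) volume p q := hg'int.abs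
  set A := ∫ s in p..q, |g' s| with hA
  have hA0 : 0 ≤ A := intervalIntegral.integral_nonneg hpq.le (fun s _ => abs_nonneg _)
  -- step 1 : ∀ t ∈ [p,q], |g x - g t| ≤ A
  have step1 : ∀ t ∈ Icc p q, |g x - g t| ≤ A := by
    intro t ht
    have hsub : uIcc t x ⊆ Icc p q := uIcc_subset_Icc ht hx
    have hftc : ∫ s in t..x, g' s = g x - g t := by
      apply intervalIntegral.integral_eq_sub_of_hasDerivAt
      · exact fun s hs => hg s (hsub hs)
      · exact (hg'.mono hsub).intervalIntegrable
    rw [← hftc]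
    have h1 : |∫ s in t..x, g' s| ≤ |∫ s in t..x, abs (g' s)| := by
      have h := intervalIntegral.norm_integral_le_abs_integral_norm (f := g') (a := t) (b := x)
        (μ := volume)
      simpa [Real.norm_eq_abs] using h
    refine h1.trans ?_
    rcases le_total t x with htx | htx
    · have hmono : (∫ s in t..x, |g' s|) ≤ A :=
        intervalIntegral.integral_mono_interval ht.1 htx hx.2
          (ae_of_all _ fun s => abs_nonneg (g' s)) habsint
      have hnn : 0 ≤ ∫ s in t..x, |g' s| :=
        intervalIntegral.integral_nonneg htx (fun s _ => abs_nonneg _)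
      rwa [abs_of_nonneg hnn]
    · have hflip : (∫ s in t..x, |g' s|) = -∫ s in x..t, |g' s| :=
        intervalIntegral.integral_symm x t
      have hmono : (∫ s in x..t, |g' s|) ≤ A :=
        intervalIntegral.integral_mono_interval hx.1 htx ht.2
          (ae_of_all _ fun s => abs_nonneg (g' s)) habsint
      have hnn : 0 ≤ ∫ s in x..t, |g' s| :=
        intervalIntegral.integral_nonneg htx (fun s _ => abs_nonneg _)
      rw [hflip, abs_neg, abs_of_nonneg hnn]
      exact hmono
  -- step 2 : |g x - m| ≤ A
  set m := (1 / (q - p)) * ∫ t in p..q, g t with hm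
  have step2 : |g x - m| ≤ A := by
    have hsplit : (∫ t in p..q, (g x - g t)) = (q - p) * g x - ∫ t in p..q, g t := by
      rw [intervalIntegral.integral_sub intervalIntegrable_const hgint,
        intervalIntegral.integral_const, smul_eq_mul]
    have heq : g x - m = (1 / (q - p)) * ∫ t in p..q, (g x - g t) := by
      rw [hsplit, hm]; field_simp
    have habs : |∫ t in p..q, (g x - g t)| ≤ (q - p) * A := by
      have h1 : |∫ t in p..q, (g x - g t)| ≤ ∫ t in p..q, |g x - g t| :=
        intervalIntegral.abs_integral_le_integral_abs hpq.le
      refine h1.trans ?_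
      have h2 : (∫ t in p..q, |g x - g t|) ≤ ∫ _t in p..q, A := by
        apply intervalIntegral.integral_mono_on hpq.le
        · exact ((_root_.intervalIntegrable_const).sub hgint).abs
        · exact intervalIntegrable_const
        · exact step1
      simpa [smul_eq_mul, mul_comm] using h2
    rw [heq, abs_mul, abs_of_nonneg (by positivity : (0:ℝ) ≤ 1 / (q - p))]
    rw [div_mul_eq_mul_div, one_mul, div_le_iff₀ hqp] at *
    calc |∫ t in p..q, (g x - g t)| ≤ (q - p) * A := habs
      _ = A * (q - p) := mul_comm _ _
  -- conclude
  have hsq : (g x - m) ^ 2 ≤ A ^ 2 := by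
    have := abs_le.1 step2
    nlinarith
  exact hsq.trans (l2_cs hpq hg')

-- average bound : m² ≤ 2 (q-p) B + (2/(q-p)) Φ
lemma avg_sq_le {g g' : ℝ → ℝ} {p q : ℝ} (hpq : p < q)
    (hg : ∀ s ∈ Icc p q, HasDerivAt g (g' s) s)
    (hg' : ContinuousOn g' (Icc p q)) :
    ((1 / (q - p)) * ∫ t in p..q, g t) ^ 2
      ≤ 2 * (q - p) * (∫ s in p..q, (g' s) ^ 2) + (2 / (q - p)) * ∫ t in p..q, (g t) ^ 2 := by
  have hqp : (0:ℝ) < q - p := by linarith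
  have hgc : ContinuousOn g (Icc p q) := fun s hs => (hg s hs).continuousAt.continuousWithinAt
  set m := (1 / (q - p)) * ∫ t in p..q, g t with hm
  set B := ∫ s in p..q, (g' s) ^ 2 with hB
  have hB0 : 0 ≤ B := intervalIntegral.integral_nonneg hpq.le (fun s _ => sq_nonneg _)
  have hgint : IntervalIntegrable g volume p q :=
    (hgc.mono (by rw [uIcc_of_le hpq.le])).intervalIntegrable
  have hgsqint : IntervalIntegrable (fun t => (g t) ^ 2) volume p q :=
    ((hgc.pow 2).mono (by rw [uIcc_of_le hpq.le])).intervalIntegrable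
  have hmgint : IntervalIntegrable (fun t => (m - g t) ^ 2) volume p q := by
    apply ContinuousOn.intervalIntegrable
    exact ((continuousOn_const.sub hgc).pow 2).mono (by rw [uIcc_of_le hpq.le])
  have hpt : ∀ t ∈ Icc p q, m ^ 2 ≤ 2 * (m - g t) ^ 2 + 2 * (g t) ^ 2 := by
    intro t _; nlinarith [sq_nonneg (m - 2 * g t)]
  have hint1 : (q - p) * m ^ 2 ≤ ∫ t in p..q, (2 * (m - g t) ^ 2 + 2 * (g t) ^ 2) := by
    have h := intervalIntegral.integral_mono_on hpq.le intervalIntegrable_const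
      ((hmgint.const_mul 2).add (hgsqint.const_mul 2)) hpt
    simpa [smul_eq_mul, mul_comm] using h
  have hint2 : (∫ t in p..q, (2 * (m - g t) ^ 2 + 2 * (g t) ^ 2))
      = 2 * (∫ t in p..q, (m - g t) ^ 2) + 2 * ∫ t in p..q, (g t) ^ 2 := by
    rw [intervalIntegral.integral_add (hmgint.const_mul 2) (hgsqint.const_mul 2),
      intervalIntegral.integral_const_mul, intervalIntegral.integral_const_mul]
  have hint3 : (∫ t in p..q, (m - g t) ^ 2) ≤ (q - p) * ((q - p) * B) := by
    have h := intervalIntegral.integral_mono_on hpq.le hmgint intervalIntegrable_const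
      (fun t ht => by
        have h := poincare1D hpq hg hg' ht
        rw [← hm, ← hB] at h
        have heq : (m - g t) ^ 2 = (g t - m) ^ 2 := by ring
        rw [heq]; exact h)
    simpa [smul_eq_mul, mul_comm] using h
  have : (q - p) * m ^ 2 ≤ 2 * ((q - p) * ((q - p) * B)) + 2 * ∫ t in p..q, (g t) ^ 2 := by
    calc (q - p) * m ^ 2 ≤ _ := hint1
      _ = _ := hint2
      _ ≤ _ := by nlinarith [hint3]
  set Phi := ∫ t in p..q, (g t) ^ 2 with hPhi
  have key : (2 / (q - p)) * Phi * (q - p) = 2 * Phi := by field_simp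
  nlinarith [this, key, hqp]

lemma Kset_card_lb {a c d e : ℝ} (hc : 0 ≤ c) (hcd : c < d) (hd : d ≤ a)
    (he : 0 < e) (hsmall : e ≤ (d - c) / 4) :
    (d - c) / (2 * e) ≤ ((Kset a c d e).card : ℝ) := by
  classical
  have hdc : 0 < d - c := by linarith
  have h4 : 4 * e ≤ d - c := by linarith [hsmall]
  set k0 := ⌈c / e⌉₊ with hk0
  set k1 := ⌊d / e⌋₊ with hk1
  have hk0lt : (k0 : ℝ) < c / e + 1 := Nat.ceil_lt_add_one (by positivity)
  have hk1gt : d / e - 1 < (k1 : ℝ) := Nat.sub_one_lt_floor _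
  have hgap : c / e + 4 ≤ d / e := by
    have h1 : (c + 4 * e) / e ≤ d / e := by gcongr; linarith
    have h2 : (c + 4 * e) / e = c / e + 4 := by field_simp
    linarith
  have hk0k1 : (k0 : ℝ) < (k1 : ℝ) := by linarith
  have hk0k1' : k0 < k1 := by exact_mod_cast hk0k1
  have hsubset : Finset.Icc k0 (k1 - 1) ⊆ Kset a c d e := by
    intro k hk
    rw [Finset.mem_Icc] at hk
    have hkc : c ≤ (k : ℝ) * e := by
      have h1 : c / e ≤ (k0 : ℝ) := Nat.le_ceil _
      have h2 : (k0 : ℝ) ≤ (k : ℝ) := by exact_mod_cast hk.1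
      rw [div_le_iff₀ he] at h1
      nlinarith
    have hkd : ((k : ℝ) + 1) * e ≤ d := by
      have h1 : k + 1 ≤ k1 := by omega
      have h2 : ((k1 : ℝ)) ≤ d / e := Nat.floor_le (div_nonneg (by linarith) he.le)
      have h3 : ((k : ℝ) + 1) ≤ (k1 : ℝ) := by exact_mod_cast h1
      rw [le_div_iff₀ he] at h2
      nlinarith
    rw [Kset, Finset.mem_filter]
    refine ⟨?_, ?_, ?_⟩
    · rw [Finset.mem_range, Nat.lt_succ_iff]
      apply Nat.le_floor
      rw [le_div_iff₀ he]
      nlinarith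
    · rw [mem_Icc]
      exact ⟨by positivity, by nlinarith⟩
    · refine ⟨(k : ℝ) * e + e / 2, ⟨by nlinarith, by nlinarith⟩, by nlinarith, by nlinarith⟩
  have hcard : k1 - k0 ≤ (Kset a c d e).card := by
    have := Finset.card_le_card hsubset
    rwa [Nat.card_Icc, Nat.sub_add_cancel (by omega : 1 ≤ k1)] at this
  have hcast : ((k1 : ℝ) - (k0 : ℝ)) ≤ ((Kset a c d e).card : ℝ) := by
    have h := (Nat.cast_le (α := ℝ)).2 hcard
    rwa [Nat.cast_sub hk0k1'.le] at h
  have hlb : (d - c) / e - 2 ≤ (k1 : ℝ) - (k0 : ℝ) := by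
    have hsplit : (d - c) / e = d / e - c / e := by ring
    linarith [hk0lt, hk1gt]
  have hfin : (d - c) / (2 * e) ≤ (d - c) / e - 2 := by
    set r := (d - c) / e with hr
    have hr4 : 4 ≤ r := by rw [hr, le_div_iff₀ he]; linarith
    have : (d - c) / (2 * e) = r / 2 := by rw [hr, div_div]; ring_nf
    rw [this]; linarith
  linarith

instance : Measure.IsAddHaarMeasure (volume : Measure (ℝ × ℝ)) := by
  rw [MeasureTheory.Measure.volume_eq_prod]; infer_instance

lemma finrank_R2 : Module.finrank ℝ (ℝ × ℝ) = 2 := by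
  simp [Module.finrank_prod]

lemma cell_scale (u : ℝ × ℝ → ℝ) {e : ℝ} (k L V : ℝ) (he : 0 < e) :
    ∫ y in Yabove L V, (u (e * (k + y.1), e * y.2)) ^ 2
      = (e ^ 2)⁻¹ * ∫ x in Ioo (e * k) (e * k + e) ×ˢ Ioo (e * L) (e * (L + V)), (u x) ^ 2 := by
  classical
  set cell : Set (ℝ × ℝ) := Ioo (e * k) (e * k + e) ×ˢ Ioo (e * L) (e * (L + V)) with hcell
  have hmeasY : MeasurableSet (Yabove L V) := (measurableSet_Ioo.prod measurableSet_Ioo)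
  have hmeasC : MeasurableSet cell := (measurableSet_Ioo.prod measurableSet_Ioo)
  set F : ℝ × ℝ → ℝ := cell.indicator (fun x => (u x) ^ 2) with hF
  have key : ∀ y : ℝ × ℝ, (Yabove L V).indicator
        (fun y : ℝ × ℝ => (u (e * (k + y.1), e * y.2)) ^ 2) y
      = F ((e * k, 0) + e • y) := by
    intro y
    have hpt : ((e * k, 0) + e • y) = (e * (k + y.1), e * y.2) := by
      ext
      · simp only [Prod.fst_add, Prod.smul_fst, smul_eq_mul]; ring
      · simp only [Prod.snd_add, Prod.smul_snd, smul_eq_mul]; ring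
    rw [hpt, hF]
    have hmem : ((e * (k + y.1), e * y.2) : ℝ × ℝ) ∈ cell ↔ y ∈ Yabove L V := by
      rw [hcell, Yabove]
      simp only [mem_prod, mem_Ioo]
      constructor
      · rintro ⟨⟨h1, h2⟩, h3, h4⟩
        refine ⟨⟨by nlinarith, by nlinarith⟩, by nlinarith, by nlinarith⟩
      · rintro ⟨⟨h1, h2⟩, h3, h4⟩
        refine ⟨⟨by nlinarith, by nlinarith⟩, by nlinarith, by nlinarith⟩
    rw [Set.indicator_apply, Set.indicator_apply, if_congr hmem.symm rfl rfl]
  calc ∫ y in Yabove L V, (u (e * (k + y.1), e * y.2)) ^ 2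
      = ∫ y, (Yabove L V).indicator (fun y : ℝ × ℝ => (u (e * (k + y.1), e * y.2)) ^ 2) y :=
        (integral_indicator hmeasY).symm
    _ = ∫ y, F ((e * k, 0) + e • y) := by simp_rw [key]
    _ = |(e ^ Module.finrank ℝ (ℝ × ℝ))⁻¹| • ∫ y, F ((e * k, 0) + y) :=
        Measure.integral_comp_smul volume (fun z => F ((e * k, 0) + z)) e
    _ = |(e ^ 2)⁻¹| • ∫ y, F y := by rw [finrank_R2, integral_add_left_eq_self]
    _ = (e ^ 2)⁻¹ * ∫ x in cell, (u x) ^ 2 := by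
        rw [hF, integral_indicator hmeasC, abs_of_nonneg (by positivity), smul_eq_mul]

lemma strip_bound (a L V e : ℝ) (ha : 0 < a) (hL : 0 < L) (hV : 0 < V) (he : 0 < e)
    (u : ℝ × ℝ → ℝ) (W : Set (ℝ × ℝ)) (hW : IsOpen W)
    (hcl : Icc 0 a ×ˢ Icc (e * L) (e * (L + V)) ⊆ W) (hu : ContDiffOn ℝ 1 u W) :
    ∫ x in Ioo 0 a ×ˢ Ioo (e * L) (e * (L + V)), (u x) ^ 2
      ≤ (e * V) * (2 * (∫ x₁ in (0:ℝ)..a, (vEps L V e u x₁) ^ 2)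
          + 2 * (e * V) * ∫ x in Ioo 0 a ×ˢ Ioo (e * L) (e * (L + V)), (pd2 u x) ^ 2) := by
  set p := e * L with hp
  set q := e * (L + V) with hq
  have hpq : p < q := by rw [hp, hq]; nlinarith
  have hqp : q - p = e * V := by rw [hp, hq]; ring
  have heV : 0 < e * V := by positivity
  set I1 : Set ℝ := Ioo (0:ℝ) a with hI1
  set J : Set ℝ := Ioo p q with hJ
  set S : Set (ℝ × ℝ) := I1 ×ˢ J with hS
  set box : Set (ℝ × ℝ) := Icc 0 a ×ˢ Icc p q with hbox
  have hSsub : S ⊆ box := prod_mono Ioo_subset_Icc_self Ioo_subset_Icc_self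
  have hmeasS : MeasurableSet S := measurableSet_Ioo.prod measurableSet_Ioo
  have hcpt : IsCompact box := isCompact_Icc.prod isCompact_Icc
  have hucS : ContinuousOn u box := hu.continuousOn.mono hcl
  have hfd : ContinuousOn (fun x => fderiv ℝ u x) W :=
    hu.continuousOn_fderiv_of_isOpen hW le_rfl
  have hd2W : ContinuousOn (pd2 u) W := hfd.clm_apply continuousOn_const
  have hd2box : ContinuousOn (pd2 u) box := hd2W.mono hcl
  -- integrability on S
  have hu2int : IntegrableOn (fun x => (u x) ^ 2) S :=
    (((hucS.pow 2).integrableOn_compact hcpt)).mono_set hSsub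
  have huint : IntegrableOn u S := ((hucS.integrableOn_compact hcpt)).mono_set hSsub
  have hd2int : IntegrableOn (fun x => (pd2 u x) ^ 2) S :=
    (((hd2box.pow 2).integrableOn_compact hcpt)).mono_set hSsub
  -- product structure
  set μI := volume.restrict I1 with hμI
  set μJ := volume.restrict J with hμJ
  have hprod : volume.restrict S = μI.prod μJ := by
    rw [hμI, hμJ, Measure.prod_restrict, hS, MeasureTheory.Measure.volume_eq_prod]
  have hfinJ : IsFiniteMeasure μJ := by
    constructor; rw [hμJ, Measure.restrict_apply_univ]; exact measure_Ioo_lt_top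
  have hfinI : IsFiniteMeasure μI := by
    constructor; rw [hμI, Measure.restrict_apply_univ]; exact measure_Ioo_lt_top
  set B : ℝ → ℝ := fun x₁ => ∫ x₂, (pd2 u (x₁, x₂)) ^ 2 ∂μJ with hB
  set Phi : ℝ → ℝ := fun x₁ => ∫ x₂, (u (x₁, x₂)) ^ 2 ∂μJ with hPhi
  have hd2P : Integrable (fun x : ℝ × ℝ => (pd2 u x) ^ 2) (μI.prod μJ) := by
    rw [← hprod]; exact hd2int
  have hu2P : Integrable (fun x : ℝ × ℝ => (u x) ^ 2) (μI.prod μJ) := by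
    rw [← hprod]; exact hu2int
  have huP : Integrable u (μI.prod μJ) := by rw [← hprod]; exact huint
  have hBint : Integrable B μI := hd2P.integral_prod_left
  have hPhiint : Integrable Phi μI := hu2P.integral_prod_left
  have hv'int : Integrable (fun x₁ => ∫ x₂, u (x₁, x₂) ∂μJ) μI := huP.integral_prod_left
  set vE := vEps L V e u with hvE
  -- pointwise identities / bounds
  have hinterval : ∀ (f : ℝ → ℝ), (∫ s in p..q, f s) = ∫ s, f s ∂μJ := by
    intro f
    rw [intervalIntegral.integral_of_le hpq.le, hμJ, hJ, MeasureTheory.integral_Ioc_eq_integral_Ioo]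
  have hveq : ∀ x₁, vE x₁ = (1 / (e * V)) * ∫ x₂, u (x₁, x₂) ∂μJ := by
    intro x₁
    rw [hvE, vEps, ← hp, ← hq, hinterval (fun x₂ => u (x₁, x₂))]
  have hslice : ∀ x₁ ∈ Icc 0 a,
      (∀ s ∈ Icc p q, HasDerivAt (fun x₂ => u (x₁, x₂)) (pd2 u (x₁, s)) s) ∧
        ContinuousOn (fun s => pd2 u (x₁, s)) (Icc p q) := by
    intro x₁ hx₁
    constructor
    · intro s hs
      have hmemW : ((x₁, s) : ℝ × ℝ) ∈ W := hcl ⟨hx₁, hs⟩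
      have hdiff : DifferentiableAt ℝ u (x₁, s) :=
        (hu.differentiableOn one_ne_zero).differentiableAt (hW.mem_nhds hmemW)
      have hcurve : HasDerivAt (fun s : ℝ => ((x₁, s) : ℝ × ℝ)) (0, 1) s :=
        (hasDerivAt_const s x₁).prodMk (hasDerivAt_id s)
      exact hdiff.hasFDerivAt.comp_hasDerivAt s hcurve
    · have hline : Continuous (fun s : ℝ => ((x₁, s) : ℝ × ℝ)) := by continuity
      exact hd2W.comp hline.continuousOn (fun s hs => hcl ⟨hx₁, hs⟩)
  have hBid : ∀ x₁, B x₁ = ∫ s in p..q, (pd2 u (x₁, s)) ^ 2 := by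
    intro x₁; rw [hinterval]
  have hPhiid : ∀ x₁, Phi x₁ = ∫ s in p..q, (u (x₁, s)) ^ 2 := by
    intro x₁; rw [hinterval]
  have hvm : ∀ x₁, vE x₁ = (1 / (q - p)) * ∫ s in p..q, u (x₁, s) := by
    intro x₁; rw [hveq x₁, hqp, hinterval (fun s => u (x₁, s))]
  -- (a2): pointwise bound on S
  have ha2 : ∀ x₁ ∈ Icc 0 a, ∀ x₂ ∈ Icc p q,
      (u (x₁, x₂)) ^ 2 ≤ 2 * (vE x₁) ^ 2 + 2 * (e * V) * B x₁ := by
    intro x₁ hx₁ x₂ hx₂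
    obtain ⟨hderiv, hcont⟩ := hslice x₁ hx₁
    have hP := poincare1D hpq hderiv hcont hx₂
    rw [← hvm x₁, ← hBid x₁] at hP
    rw [hqp] at hP
    nlinarith [hP, sq_nonneg (u (x₁, x₂) - 2 * vE x₁)]
  -- (b2): average bound
  have hb2 : ∀ x₁ ∈ Icc 0 a,
      (vE x₁) ^ 2 ≤ 2 * (e * V) * B x₁ + (2 / (e * V)) * Phi x₁ := by
    intro x₁ hx₁
    obtain ⟨hderiv, hcont⟩ := hslice x₁ hx₁
    have hP := avg_sq_le hpq hderiv hcont
    rw [← hvm x₁, ← hBid x₁, ← hPhiid x₁, hqp] at hP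
    exact hP
  -- integrability of vE^2 on μI
  have hvmeas : AEStronglyMeasurable vE μI := by
    have h1 : AEStronglyMeasurable (fun x₁ => ∫ x₂, u (x₁, x₂) ∂μJ) μI :=
      hv'int.aestronglyMeasurable
    have : vE = fun x₁ => (1 / (e * V)) * ∫ x₂, u (x₁, x₂) ∂μJ := funext hveq
    rw [this]
    exact h1.const_mul _
  have hv2meas : AEStronglyMeasurable (fun x₁ => (vE x₁) ^ 2) μI := by
    simpa only [pow_two] using (show AEStronglyMeasurable (fun x₁ => vE x₁ * vE x₁) μI from hvmeas.mul hvmeas)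
  have hv2int : Integrable (fun x₁ => (vE x₁) ^ 2) μI := by
    apply Integrable.mono' ((hBint.const_mul (2 * (e * V))).add (hPhiint.const_mul (2 / (e * V))))
      hv2meas
    rw [hμI, ae_restrict_iff' measurableSet_Ioo]
    apply ae_of_all
    intro x₁ hx₁
    have hb := hb2 x₁ (Ioo_subset_Icc_self hx₁)
    rw [Real.norm_eq_abs, abs_of_nonneg (sq_nonneg _)]
    exact hb
  -- main monotonicity step on S
  set h0 : ℝ → ℝ := fun x₁ => 2 * (vE x₁) ^ 2 + 2 * (e * V) * B x₁ with hh0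
  have hh0int : Integrable h0 μI := (hv2int.const_mul 2).add (hBint.const_mul _)
  have hRHSP : Integrable (fun x : ℝ × ℝ => h0 x.1) (μI.prod μJ) := by
    have h := hh0int.mul_prod (integrable_const (1:ℝ) (μ := μJ))
    simpa using h
  have hRHSint : IntegrableOn (fun x : ℝ × ℝ => h0 x.1) S := by
    rw [IntegrableOn, hprod]; exact hRHSP
  have hstep : (∫ x in S, (u x) ^ 2) ≤ ∫ x in S, h0 x.1 := by
    apply setIntegral_mono_on hu2int hRHSint hmeasS
    intro x hx
    rw [hS] at hx
    exact ha2 x.1 (Ioo_subset_Icc_self hx.1) x.2 (Ioo_subset_Icc_self hx.2)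
  -- compute ∫_S h0
  have hμJuniv : (μJ univ).toReal = q - p := by
    rw [hμJ, Measure.restrict_apply_univ, hJ, Real.volume_Ioo,
      ENNReal.toReal_ofReal (by linarith)]
  have hcompute : (∫ x in S, h0 x.1) = (q - p) * (∫ x₁, h0 x₁ ∂μI) := by
    have h1 : (∫ x in S, h0 x.1) = ∫ z : ℝ × ℝ, h0 z.1 ∂(μI.prod μJ) := by
      rw [← hprod]
    rw [h1, MeasureTheory.integral_prod _ hRHSP]
    simp_rw [MeasureTheory.integral_const, smul_eq_mul, measureReal_def, hμJuniv]
    rw [MeasureTheory.integral_const_mul]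
  have hBtot : (∫ x₁, B x₁ ∂μI) = ∫ x in S, (pd2 u x) ^ 2 := by
    rw [← MeasureTheory.integral_prod _ hd2P, ← hprod]
  have hvtot : (∫ x₁, (vE x₁) ^ 2 ∂μI) = ∫ x₁ in (0:ℝ)..a, (vE x₁) ^ 2 := by
    rw [intervalIntegral.integral_of_le ha.le, MeasureTheory.integral_Ioc_eq_integral_Ioo, hμI, hI1]
  have hsplit : (∫ x₁, h0 x₁ ∂μI)
      = 2 * (∫ x₁, (vE x₁) ^ 2 ∂μI) + 2 * (e * V) * ∫ x₁, B x₁ ∂μI := by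
    rw [hh0]
    rw [MeasureTheory.integral_add (hv2int.const_mul 2) (hBint.const_mul _),
      MeasureTheory.integral_const_mul, MeasureTheory.integral_const_mul]
  calc (∫ x in S, (u x) ^ 2) ≤ ∫ x in S, h0 x.1 := hstep
    _ = (q - p) * (∫ x₁, h0 x₁ ∂μI) := hcompute
    _ = (e * V) * (2 * (∫ x₁ in (0:ℝ)..a, (vE x₁) ^ 2)
          + 2 * (e * V) * ∫ x in S, (pd2 u x) ^ 2) := by
        rw [hsplit, hBtot, hvtot, hqp]

lemma main_est (a L V c d e : ℝ) (ha : 0 < a) (hL : 0 < L) (hV : 0 < V)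
    (hc : 0 ≤ c) (hcd : c < d) (hd : d ≤ a) (he : 0 < e) (hsmall : e ≤ (d - c) / 4)
    (u : ℝ × ℝ → ℝ) (W : Set (ℝ × ℝ)) (hW : IsOpen W)
    (hcl : Icc 0 a ×ˢ Icc (e * L) (e * (L + V)) ⊆ W) (hu : ContDiffOn ℝ 1 u W)
    (Mg M' : ℝ) (hMg0 : 0 ≤ Mg)
    (hgrad : ∫ x in Ioo 0 a ×ˢ Ioo (e * L) (e * (L + V)), (pd2 u x) ^ 2 ≤ Mg)
    (hv : ∫ x₁ in (0:ℝ)..a, (vEps L V e u x₁) ^ 2 ≤ M') :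
    ∫ y in Yabove L V, (Uav a c d e u y) ^ 2 ≤ (4 * V / (d - c)) * (M' + e * V * Mg) := by
  classical
  have hdc : 0 < d - c := by linarith
  have hM'0 : 0 ≤ M' := by
    refine le_trans ?_ hv
    exact intervalIntegral.integral_nonneg ha.le (fun x _ => sq_nonneg _)
  set K := Kset a c d e with hK
  set κ : ℝ := (K.card : ℝ) with hκ
  have hκlb : (d - c) / (2 * e) ≤ κ := Kset_card_lb hc hcd hd he hsmall
  have hκpos : 0 < κ := lt_of_lt_of_le (by positivity) hκlb
  -- basic sets
  set S : Set (ℝ × ℝ) := Ioo 0 a ×ˢ Ioo (e * L) (e * (L + V)) with hS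
  set box : Set (ℝ × ℝ) := Icc 0 a ×ˢ Icc (e * L) (e * (L + V)) with hbox
  set Ybox : Set (ℝ × ℝ) := Icc (0:ℝ) 1 ×ˢ Icc L (L + V) with hYbox
  have hYsub : Yabove L V ⊆ Ybox := prod_mono Ioo_subset_Icc_self Ioo_subset_Icc_self
  have hYmeas : MeasurableSet (Yabove L V) := measurableSet_Ioo.prod measurableSet_Ioo
  have hYcpt : IsCompact Ybox := isCompact_Icc.prod isCompact_Icc
  have hucbox : ContinuousOn u box := hu.continuousOn.mono hcl
  -- membership facts for K
  have hKfact : ∀ k ∈ K, 0 ≤ (k : ℝ) * e ∧ (k : ℝ) * e + e ≤ a := by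
    intro k hk
    rw [hK, Kset, Finset.mem_filter] at hk
    obtain ⟨-, hmem, -⟩ := hk
    rw [mem_Icc] at hmem
    exact ⟨hmem.1, by linarith [hmem.2]⟩
  -- the rescaled integrands are integrable on Yabove
  have hTcont : ∀ k : ℕ, k ∈ K → ContinuousOn
      (fun y : ℝ × ℝ => u (e * ((k : ℝ) + y.1), e * y.2)) Ybox := by
    intro k hk
    obtain ⟨hk0, hk1⟩ := hKfact k hk
    have hmaps : MapsTo (fun y : ℝ × ℝ => ((e * ((k : ℝ) + y.1), e * y.2) : ℝ × ℝ)) Ybox box := by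
      intro y hy
      rw [hYbox, mem_prod, mem_Icc, mem_Icc] at hy
      rw [hbox, mem_prod, mem_Icc, mem_Icc]
      dsimp only
      obtain ⟨⟨h1, h2⟩, h3, h4⟩ := hy
      constructor
      · constructor <;> nlinarith
      · constructor <;> nlinarith
    have hTc : Continuous (fun y : ℝ × ℝ => ((e * ((k : ℝ) + y.1), e * y.2) : ℝ × ℝ)) := by
      fun_prop
    exact hucbox.comp hTc.continuousOn hmaps
  have hFint : ∀ k : ℕ, k ∈ K → IntegrableOn
      (fun y : ℝ × ℝ => (u (e * ((k : ℝ) + y.1), e * y.2)) ^ 2) (Yabove L V) := by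
    intro k hk
    exact (((hTcont k hk).pow 2).integrableOn_compact hYcpt).mono_set hYsub
  have hUcont : ContinuousOn (Uav a c d e u) Ybox := by
    have hsum : ContinuousOn
        (fun y : ℝ × ℝ => ∑ k ∈ K, u (e * ((k : ℝ) + y.1), e * y.2)) Ybox :=
      continuousOn_finset_sum K (fun k hk => hTcont k hk)
    have : Uav a c d e u = fun y =>
        (1 / κ) * ∑ k ∈ K, u (e * ((k : ℝ) + y.1), e * y.2) := by
      funext y; rw [Uav, hκ, hK]
    rw [this]
    exact continuousOn_const.mul hsum
  have hUint : IntegrableOn (fun y => (Uav a c d e u y) ^ 2) (Yabove L V) :=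
    (((hUcont.pow 2)).integrableOn_compact hYcpt).mono_set hYsub
  -- Jensen pointwise
  have hJensen : ∀ y : ℝ × ℝ, (Uav a c d e u y) ^ 2
      ≤ (1 / κ) * ∑ k ∈ K, (u (e * ((k : ℝ) + y.1), e * y.2)) ^ 2 := by
    intro y
    set t := ∑ k ∈ K, u (e * ((k : ℝ) + y.1), e * y.2) with ht
    have hCS : t ^ 2 ≤ κ * ∑ k ∈ K, (u (e * ((k : ℝ) + y.1), e * y.2)) ^ 2 := by
      have h := sq_sum_le_card_mul_sum_sq (s := K)
        (f := fun k => u (e * ((k : ℝ) + y.1), e * y.2))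
      exact_mod_cast h
    have hUav : Uav a c d e u y = (1 / κ) * t := by rw [Uav, hκ, hK, ht]
    rw [hUav]
    rw [mul_pow, div_pow, one_pow]
    rw [div_mul_eq_mul_div, div_le_iff₀ (by positivity), one_mul]
    calc t ^ 2 ≤ κ * ∑ k ∈ K, (u (e * ((k : ℝ) + y.1), e * y.2)) ^ 2 := hCS
      _ = 1 / κ * (∑ k ∈ K, (u (e * ((k : ℝ) + y.1), e * y.2)) ^ 2) * κ ^ 2 := by
          field_simp
  -- integrate Jensen
  have hsumint : IntegrableOn
      (fun y : ℝ × ℝ => (1 / κ) * ∑ k ∈ K, (u (e * ((k : ℝ) + y.1), e * y.2)) ^ 2)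
      (Yabove L V) := by
    apply Integrable.const_mul
    exact integrable_finset_sum K (fun k hk => hFint k hk)
  have hstep1 : (∫ y in Yabove L V, (Uav a c d e u y) ^ 2)
      ≤ ∫ y in Yabove L V, (1 / κ) * ∑ k ∈ K, (u (e * ((k : ℝ) + y.1), e * y.2)) ^ 2 :=
    setIntegral_mono_on hUint hsumint hYmeas (fun y _ => hJensen y)
  have hstep2 : (∫ y in Yabove L V, (1 / κ) * ∑ k ∈ K, (u (e * ((k : ℝ) + y.1), e * y.2)) ^ 2)
      = (1 / κ) * ∑ k ∈ K, ∫ y in Yabove L V, (u (e * ((k : ℝ) + y.1), e * y.2)) ^ 2 := by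
    rw [MeasureTheory.integral_const_mul, MeasureTheory.integral_finset_sum K (fun k hk => hFint k hk)]
  -- cells
  set cell : ℕ → Set (ℝ × ℝ) := fun k => Ioo (e * k) (e * k + e) ×ˢ Ioo (e * L) (e * (L + V))
    with hcell
  have hcellmeas : ∀ k ∈ K, MeasurableSet (cell k) :=
    fun k _ => measurableSet_Ioo.prod measurableSet_Ioo
  have hcellsub : ∀ k ∈ K, cell k ⊆ S := by
    intro k hk
    obtain ⟨hk0, hk1⟩ := hKfact k hk
    rw [hcell, hS]
    apply prod_mono _ subset_rfl
    apply Ioo_subset_Ioo (by nlinarith) (by nlinarith)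
  have hu2S : IntegrableOn (fun x => (u x) ^ 2) S := by
    have hSsub : S ⊆ box := prod_mono Ioo_subset_Icc_self Ioo_subset_Icc_self
    exact (((hucbox.pow 2)).integrableOn_compact (isCompact_Icc.prod isCompact_Icc)).mono_set hSsub
  have hcellint : ∀ k ∈ K, IntegrableOn (fun x => (u x) ^ 2) (cell k) :=
    fun k hk => hu2S.mono_set (hcellsub k hk)
  have hdisj : (↑K : Set ℕ).Pairwise (Function.onFun Disjoint cell) := by
    intro k _ l _ hkl
    rw [Function.onFun, hcell]
    apply Disjoint.set_prod_left
    rw [Set.Ioo_disjoint_Ioo]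
    rcases lt_or_gt_of_ne hkl with h | h
    · have : (k : ℝ) + 1 ≤ (l : ℝ) := by exact_mod_cast h
      rw [min_le_iff]
      left
      rw [le_max_iff]
      right
      nlinarith
    · have : (l : ℝ) + 1 ≤ (k : ℝ) := by exact_mod_cast h
      rw [min_le_iff]
      right
      rw [le_max_iff]
      left
      nlinarith
  have hstep3 : (∑ k ∈ K, ∫ x in cell k, (u x) ^ 2) = ∫ x in ⋃ k ∈ K, cell k, (u x) ^ 2 :=
    (MeasureTheory.integral_biUnion_finset K hcellmeas hdisj hcellint).symm
  have hstep4 : (∫ x in ⋃ k ∈ K, cell k, (u x) ^ 2) ≤ ∫ x in S, (u x) ^ 2 := by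
    apply setIntegral_mono_set hu2S
    · exact ae_of_all _ (fun x => sq_nonneg _)
    · apply HasSubset.Subset.eventuallyLE
      exact iUnion₂_subset hcellsub
  -- strip bound
  have hstrip : (∫ x in S, (u x) ^ 2) ≤ (e * V) * (2 * M' + 2 * (e * V) * Mg) := by
    refine le_trans (strip_bound a L V e ha hL hV he u W hW hcl hu) ?_
    have h1 : (∫ x in Ioo 0 a ×ˢ Ioo (e * L) (e * (L + V)), (pd2 u x) ^ 2) ≤ Mg := hgrad
    gcongr <;> first | exact hv | exact h1 | positivity
  -- assemble
  have hscale : ∀ k ∈ K, (∫ y in Yabove L V, (u (e * ((k : ℝ) + y.1), e * y.2)) ^ 2)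
      = (e ^ 2)⁻¹ * ∫ x in cell k, (u x) ^ 2 := fun k _ => cell_scale u (k : ℝ) L V he
  have hchain : (∫ y in Yabove L V, (Uav a c d e u y) ^ 2)
      ≤ (1 / κ) * ((e ^ 2)⁻¹ * ((e * V) * (2 * M' + 2 * (e * V) * Mg))) := by
    calc (∫ y in Yabove L V, (Uav a c d e u y) ^ 2)
        ≤ _ := hstep1
      _ = (1 / κ) * ∑ k ∈ K, ∫ y in Yabove L V, (u (e * ((k : ℝ) + y.1), e * y.2)) ^ 2 := hstep2
      _ = (1 / κ) * ((e ^ 2)⁻¹ * ∑ k ∈ K, ∫ x in cell k, (u x) ^ 2) := by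
          rw [Finset.sum_congr rfl hscale, ← Finset.mul_sum]
      _ ≤ (1 / κ) * ((e ^ 2)⁻¹ * ((e * V) * (2 * M' + 2 * (e * V) * Mg))) := by
          apply mul_le_mul_of_nonneg_left _ (by positivity)
          apply mul_le_mul_of_nonneg_left _ (by positivity)
          rw [hstep3]
          exact le_trans hstep4 hstrip
  refine le_trans hchain ?_
  -- final arithmetic
  have hκe : (d - c) / 2 ≤ κ * e := by
    rw [div_le_iff₀ (by norm_num : (0:ℝ) < 2)] at *
    calc d - c ≤ κ * (2 * e) := by
          have := hκlb
          rw [div_le_iff₀ (by positivity)] at this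
          linarith [this]
      _ = κ * e * 2 := by ring
  have hX0 : 0 ≤ M' + e * V * Mg := by positivity
  have hval : (1 / κ) * ((e ^ 2)⁻¹ * ((e * V) * (2 * M' + 2 * (e * V) * Mg)))
      = (2 * V / (κ * e)) * (M' + e * V * Mg) := by
    field_simp
  rw [hval]
  apply mul_le_mul_of_nonneg_right _ hX0
  rw [div_le_div_iff₀ (by positivity) hdc]
  nlinarith [hκe]

/-- **L² bound for the cell averages in the resonator strip.** -/
theorem cell_average_L2_bound_strip
    (a b L V α : ℝ) (ha : 0 < a) (hb : 0 < b) (hL : 0 < L) (hV : 0 < V) (hα : 0 < α)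
    (c d : ℝ) (hc : 0 ≤ c) (hcd : c < d) (hd : d ≤ a)
    (ε : ℕ → ℝ) (hadm : ∀ n, Admissible a (ε n)) (hεlim : Tendsto ε atTop (𝓝 0))
    (uu : ℕ → ℝ × ℝ → ℝ)
    (hreg : ∀ n, C1Nhd (uu n) (OmegaEps a b L V α (ε n)))
    (M : ℝ)
    (hbdd : ∀ n, ∫ x in OmegaEps a b L V α (ε n),
      ((uu n x) ^ 2 + dot (grad (uu n) x) (grad (uu n) x)) ≤ M)
    (M' : ℝ)
    (hvL2 : ∀ n, ∫ x₁ in (0:ℝ)..a, (vEps L V (ε n) (uu n) x₁) ^ 2 ≤ M') :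
    ∃ C : ℝ, ∀ n, ∫ y in Yabove L V, (Uav a c d (ε n) (uu n) y) ^ 2 ≤ C := by
  classical
  have hdc : 0 < d - c := by linarith
  -- nonnegativity of M and M'
  have hΩmeas : ∀ e : ℝ, MeasurableSet (OmegaEps a b L V α e) := by
    intro e
    apply MeasurableSet.union
    apply MeasurableSet.union
    · exact measurableSet_Ioo.prod measurableSet_Ioo
    · exact measurableSet_Ioo.prod measurableSet_Ioo
    · exact (Finset.range _).measurableSet_biUnion
        (fun k _ => measurableSet_Ioo.prod measurableSet_Icc)
  have hM0 : 0 ≤ M := by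
    refine le_trans ?_ (hbdd 0)
    apply setIntegral_nonneg (hΩmeas (ε 0))
    intro x _
    have : dot (grad (uu 0) x) (grad (uu 0) x) = (pd1 (uu 0) x) ^ 2 + (pd2 (uu 0) x) ^ 2 := by
      simp [dot, grad]; ring
    rw [this]
    positivity
  have hM'0 : 0 ≤ M' := by
    refine le_trans ?_ (hvL2 0)
    exact intervalIntegral.integral_nonneg ha.le (fun x _ => sq_nonneg _)
  -- the per-n bound when ε n is small
  have hkey : ∀ n, ε n ≤ (d - c) / 4 →
      ∫ y in Yabove L V, (Uav a c d (ε n) (uu n) y) ^ 2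
        ≤ (4 * V / (d - c)) * (M' + ((d - c) / 4) * V * M) := by
    intro n hsmall
    set e := ε n with he'
    have he : 0 < e := (hadm n).1
    obtain ⟨W, hW, hWcl, hu⟩ := hreg n
    set u := uu n with hu'
    -- box is inside closure of the strip, hence inside W
    have hstripsub : Strip a L V e ⊆ OmegaEps a b L V α e := by
      intro x hx; exact Or.inl (Or.inr hx)
    have hboxcl : Icc 0 a ×ˢ Icc (e * L) (e * (L + V)) ⊆ W := by
      have h1 : closure (Strip a L V e) = Icc 0 a ×ˢ Icc (L * e) ((L + V) * e) := by
        rw [Strip, closure_prod_eq, closure_Ioo ha.ne,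
          closure_Ioo (show (L * e) ≠ ((L + V) * e) by nlinarith)]
      have h2 : Icc 0 a ×ˢ Icc (e * L) (e * (L + V)) = closure (Strip a L V e) := by
        rw [h1, mul_comm L e, mul_comm (L + V) e]
      rw [h2]
      exact le_trans (closure_mono hstripsub) hWcl
  -- gradient bound on the strip
    have hfd : ContinuousOn (fun x => fderiv ℝ u x) W :=
      hu.continuousOn_fderiv_of_isOpen hW le_rfl
    have hd1W : ContinuousOn (pd1 u) W := hfd.clm_apply continuousOn_const
    have hd2W : ContinuousOn (pd2 u) W := hfd.clm_apply continuousOn_const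
    set S : Set (ℝ × ℝ) := Ioo 0 a ×ˢ Ioo (e * L) (e * (L + V)) with hS
    have hSeq : S = Strip a L V e := by
      rw [hS, Strip, mul_comm L e, mul_comm (L + V) e]
    have hSsubΩ : S ⊆ OmegaEps a b L V α e := hSeq ▸ hstripsub
    have hmeasS : MeasurableSet S := measurableSet_Ioo.prod measurableSet_Ioo
    -- integrability of the energy density on Ω
    have hΩbdd : Bornology.IsBounded (OmegaEps a b L V α e) := by
      apply Bornology.IsBounded.union
      apply Bornology.IsBounded.union
      · exact (Metric.isBounded_Ioo _ _).prod (Metric.isBounded_Ioo _ _)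
      · exact (Metric.isBounded_Ioo _ _).prod (Metric.isBounded_Ioo _ _)
      · apply Bornology.IsBounded.subset
          ((Metric.isBounded_Icc 0 (a + α * e ^ 3)).prod (Metric.isBounded_Icc 0 (L * e)))
        rw [Channels]
        apply iUnion₂_subset
        intro k hk
        apply prod_mono _ subset_rfl
        intro x hx
        rw [mem_Ioo] at hx
        have hk' : (k : ℝ) ≤ a / e := by
          rw [Finset.mem_range] at hk
          calc ((k : ℝ)) ≤ ⌊a / e⌋₊ := by exact_mod_cast hk.le
            _ ≤ a / e := Nat.floor_le (by positivity)
        rw [le_div_iff₀ he] at hk'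
        rw [mem_Icc]
        constructor
        · have : 0 ≤ (k : ℝ) * e := by positivity
          nlinarith [hx.1]
        · nlinarith [hx.2, he.le, hα.le]
    have hΩcl : closure (OmegaEps a b L V α e) ⊆ W := hWcl
    have hΩcpt : IsCompact (closure (OmegaEps a b L V α e)) := hΩbdd.isCompact_closure
    have hEcont : ContinuousOn
        (fun x => (u x) ^ 2 + dot (grad u x) (grad u x)) W := by
      have h1 : ContinuousOn (fun x => (u x) ^ 2) W := hu.continuousOn.pow 2
      have h2 : ContinuousOn (fun x => dot (grad u x) (grad u x)) W := by
        have : (fun x => dot (grad u x) (grad u x))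
            = fun x => pd1 u x * pd1 u x + pd2 u x * pd2 u x := by
          funext x; rw [dot, grad]
        rw [this]
        exact (hd1W.mul hd1W).add (hd2W.mul hd2W)
      exact h1.add h2
    have hEint : IntegrableOn (fun x => (u x) ^ 2 + dot (grad u x) (grad u x))
        (OmegaEps a b L V α e) := by
      exact ((hEcont.mono hΩcl).integrableOn_compact hΩcpt).mono_set subset_closure
    have hboxS : S ⊆ Icc 0 a ×ˢ Icc (e * L) (e * (L + V)) :=
      prod_mono Ioo_subset_Icc_self Ioo_subset_Icc_self
    have hd2int : IntegrableOn (fun x => (pd2 u x) ^ 2) S := by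
      refine (((((hd2W.mono hboxcl)).pow 2)).integrableOn_compact
        (isCompact_Icc.prod isCompact_Icc)).mono_set hboxS
    have hgrad : (∫ x in S, (pd2 u x) ^ 2) ≤ M := by
      have hstep1 : (∫ x in S, (pd2 u x) ^ 2)
          ≤ ∫ x in S, ((u x) ^ 2 + dot (grad u x) (grad u x)) := by
        apply setIntegral_mono_on hd2int (hEint.mono_set hSsubΩ) hmeasS
        intro x _
        have : dot (grad u x) (grad u x) = (pd1 u x) ^ 2 + (pd2 u x) ^ 2 := by
          simp [dot, grad]; ring
        rw [this]
        nlinarith [sq_nonneg (u x), sq_nonneg (pd1 u x)]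
      have hstep2 : (∫ x in S, ((u x) ^ 2 + dot (grad u x) (grad u x)))
          ≤ ∫ x in OmegaEps a b L V α e, ((u x) ^ 2 + dot (grad u x) (grad u x)) := by
        apply setIntegral_mono_set hEint
        · apply ae_of_all
          intro x
          have hdg : dot (grad u x) (grad u x) = (pd1 u x) ^ 2 + (pd2 u x) ^ 2 := by
            simp [dot, grad]; ring
          show (0:ℝ) ≤ (u x) ^ 2 + dot (grad u x) (grad u x)
          rw [hdg]
          positivity
        · exact HasSubset.Subset.eventuallyLE hSsubΩ
      exact le_trans hstep1 (le_trans hstep2 (hbdd n))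
    have hmain := main_est a L V c d e ha hL hV hc hcd hd he hsmall u W hW hboxcl hu
      M M' hM0 hgrad (hvL2 n)
    refine le_trans hmain ?_
    apply mul_le_mul_of_nonneg_left _ (by positivity)
    have : e * V * M ≤ (d - c) / 4 * V * M := by
      apply mul_le_mul_of_nonneg_right _ hM0
      exact mul_le_mul_of_nonneg_right hsmall hV.le
    linarith
  -- choose N so that ε n is small for n ≥ N
  have hev : ∀ᶠ n in atTop, ε n < (d - c) / 4 := by
    have : Iio ((d - c) / 4) ∈ 𝓝 (0:ℝ) := Iio_mem_nhds (by positivity)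
    exact hεlim.eventually this
  obtain ⟨N, hN⟩ := eventually_atTop.1 hev
  set Ctail := (4 * V / (d - c)) * (M' + ((d - c) / 4) * V * M) with hCtail
  set I : ℕ → ℝ := fun n => ∫ y in Yabove L V, (Uav a c d (ε n) (uu n) y) ^ 2 with hI
  refine ⟨max Ctail 0 + ∑ m ∈ Finset.range N, max (I m) 0, ?_⟩
  intro n
  rcases le_or_gt N n with hn | hn
  · have h1 : I n ≤ Ctail := hkey n (le_of_lt (hN n hn))
    have h2 : (0:ℝ) ≤ ∑ m ∈ Finset.range N, max (I m) 0 :=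
      Finset.sum_nonneg (fun m _ => le_max_right _ _)
    calc I n ≤ Ctail := h1
      _ ≤ max Ctail 0 := le_max_left _ _
      _ ≤ _ := by linarith
  · have h1 : I n ≤ max (I n) 0 := le_max_left _ _
    have h2 : max (I n) 0 ≤ ∑ m ∈ Finset.range N, max (I m) 0 :=
      Finset.single_le_sum (f := fun m => max (I m) 0)
        (fun m _ => le_max_right _ _) (Finset.mem_range.2 hn)
    have h3 : (0:ℝ) ≤ max Ctail 0 := le_max_right _ _
    calc I n ≤ max (I n) 0 := h1
      _ ≤ ∑ m ∈ Finset.range N, max (I m) 0 := h2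
      _ ≤ _ := by linarith
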